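/- Let A be a real symmetric m×m matrix with spectral decomposition A = Σ_{j=1}^{d} λ_j E_j (including λ_d = 0 with E_d possibly zero). Let U_n(t) = exp(−it (J_n ⊗ A)). Then for any vertex index u, the (⟨0,u⟩, ⟨1,u⟩) entry of U_n(t) equals (1/n) Σ_{j=1}^{d} (exp(−i n λ_j t) − 1) (E_j)_{u,u}. -/

import Mathlib

open Matrix Kronecker

lemma shift_eq {ν : ℂ} (hν : ν ≠ 0) (c : ℂ) (k : ℕ) :
    ν⁻¹ * ((((k+1).factorial : ℂ))⁻¹ * (ν * c) ^ (k+1))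
      = (((k+1).factorial : ℂ))⁻¹ * (c ^ (k+1) * ν ^ k) := by
  rw [mul_pow, pow_succ' ν k]
  have : ν⁻¹ * ((((k+1).factorial : ℂ))⁻¹ * (ν * ν ^ k * c ^ (k+1)))
      = (ν⁻¹ * ν) * ((((k+1).factorial : ℂ))⁻¹ * (c ^ (k+1) * ν ^ k)) := by ring
  rw [this, inv_mul_cancel₀ hν, one_mul]

lemma summable_shift {ν : ℂ} (hν : ν ≠ 0) (c : ℂ) :
    Summable fun k : ℕ => (((k+1).factorial : ℂ))⁻¹ * (c ^ (k+1) * ν ^ k) := by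
  have hsum : Summable fun k : ℕ => ((k.factorial : ℂ))⁻¹ * (ν * c) ^ k := by
    simpa [smul_eq_mul] using NormedSpace.expSeries_summable' (𝕂 := ℂ) (ν * c)
  have := ((summable_nat_add_iff 1).2 hsum).mul_left ν⁻¹
  exact this.congr fun k => shift_eq hν c k

lemma scalar_series {ν c : ℂ} (hν : ν ≠ 0) :
    ∑' k : ℕ, (((k+1).factorial : ℂ))⁻¹ * (c ^ (k+1) * ν ^ k)
      = (Complex.exp (ν * c) - 1) / ν := by
  have hsum : Summable fun k : ℕ => ((k.factorial : ℂ))⁻¹ * (ν * c) ^ k := by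
    simpa [smul_eq_mul] using NormedSpace.expSeries_summable' (𝕂 := ℂ) (ν * c)
  have hexp : Complex.exp (ν * c)
      = 1 + ∑' k : ℕ, (((k+1).factorial : ℂ))⁻¹ * (ν * c) ^ (k+1) := by
    rw [Complex.exp_eq_exp_ℂ, NormedSpace.exp_eq_tsum ℂ]
    simpa [smul_eq_mul] using Summable.tsum_eq_zero_add
      (by simpa [smul_eq_mul] using hsum :
        Summable fun k : ℕ => ((k.factorial : ℂ))⁻¹ • (ν * c) ^ k)
  have key : ∀ k : ℕ, (((k+1).factorial : ℂ))⁻¹ * (ν * c) ^ (k+1)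
      = ν * ((((k+1).factorial : ℂ))⁻¹ * (c ^ (k+1) * ν ^ k)) := by
    intro k
    rw [← shift_eq hν c k, ← mul_assoc, mul_inv_cancel₀ hν, one_mul]
  rw [funext key, tsum_mul_left] at hexp
  rw [eq_div_iff hν]
  linear_combination -hexp

lemma exp_sum_ortho {ι : Type*} [Fintype ι] [DecidableEq ι] {κ : Type*} [Fintype κ]
    [DecidableEq κ]
    (N : κ → Matrix ι ι ℂ) (c : κ → ℂ) (ν : ℂ) (hν : ν ≠ 0)
    (hN : ∀ j k, N j * N k = if j = k then ν • N j else 0) :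
    NormedSpace.exp (∑ j, c j • N j)
      = 1 + ∑ j, ((Complex.exp (ν * c j) - 1) / ν) • N j := by
  letI : SeminormedRing (Matrix ι ι ℂ) := Matrix.linftyOpSemiNormedRing
  letI : NormedRing (Matrix ι ι ℂ) := Matrix.linftyOpNormedRing
  letI : NormedAlgebra ℂ (Matrix ι ι ℂ) := Matrix.linftyOpNormedAlgebra
  set M := ∑ j, c j • N j with hM
  have hpow : ∀ k : ℕ, M ^ (k+1) = ∑ j, (c j ^ (k+1) * ν ^ k) • N j := by
    intro k
    induction k with
    | zero => simp [hM]
    | succ k ih =>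
        rw [pow_succ, ih, hM, Finset.sum_mul]
        refine Finset.sum_congr rfl fun j _ => ?_
        rw [Finset.mul_sum]
        simp only [smul_mul_assoc, mul_smul_comm, hN]
        rw [Finset.sum_eq_single j (by intro l _ hl; simp [Ne.symm hl]) (by simp)]
        simp only [eq_self_iff_true, if_true, smul_smul]
        congr 1
        ring
  have hsummand : ∀ j : κ, Summable fun k : ℕ =>
      ((((k+1).factorial : ℂ))⁻¹ * (c j ^ (k+1) * ν ^ k)) • N j := by
    intro j
    exact (summable_shift hν (c j)).smul_const _
  rw [NormedSpace.exp_eq_tsum ℂ]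
  beta_reduce
  rw [Summable.tsum_eq_zero_add (by exact NormedSpace.expSeries_summable' (𝕂 := ℂ) M :
    Summable fun n : ℕ => ((n.factorial : ℂ))⁻¹ • M ^ n)]
  simp only [pow_zero, Nat.factorial_zero, Nat.cast_one, inv_one, one_smul]
  congr 1
  calc ∑' k : ℕ, (((k+1).factorial : ℂ))⁻¹ • M ^ (k+1)
      = ∑' k : ℕ, ∑ j, ((((k+1).factorial : ℂ))⁻¹ * (c j ^ (k+1) * ν ^ k)) • N j := by
        refine tsum_congr fun k => ?_
        rw [hpow k, Finset.smul_sum]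
        exact Finset.sum_congr rfl fun j _ => by rw [smul_smul]
    _ = ∑ j, ∑' k : ℕ, ((((k+1).factorial : ℂ))⁻¹ * (c j ^ (k+1) * ν ^ k)) • N j :=
        Summable.tsum_finsetSum fun j _ => hsummand j
    _ = ∑ j, ((Complex.exp (ν * c j) - 1) / ν) • N j := by
        refine Finset.sum_congr rfl fun j _ => ?_
        rw [Summable.tsum_smul_const (summable_shift hν (c j)), scalar_series hν]

theorem blowup_transition_entry {m n d : ℕ} (hn : 2 ≤ n)
    (A : Matrix (Fin m) (Fin m) ℂ) (lam : Fin (d + 1) → ℝ)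
    (E : Fin (d + 1) → Matrix (Fin m) (Fin m) ℂ)
    (hinj : Function.Injective lam) (hlast : lam (Fin.last d) = 0)
    (hherm : ∀ j, (E j).IsHermitian)
    (horth : ∀ j k, E j * E k = if j = k then E j else 0)
    (hsum : ∑ j, E j = 1)
    (hA : A = ∑ j, (lam j : ℂ) • E j)
    (u : Fin m) (t : ℝ) :
    NormedSpace.exp
        ((-(Complex.I * t)) •
          (((Matrix.of fun _ _ => (1 : ℂ)) : Matrix (Fin n) (Fin n) ℂ) ⊗ₖ A))
        (⟨⟨0, by omega⟩, u⟩) (⟨⟨1, by omega⟩, u⟩) =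
      (n : ℂ)⁻¹ * ∑ j, (Complex.exp (-(Complex.I) * n * lam j * t) - 1) * E j u u := by
  set J : Matrix (Fin n) (Fin n) ℂ := Matrix.of fun _ _ => (1 : ℂ) with hJ
  set N : Fin (d+1) → Matrix (Fin n × Fin m) (Fin n × Fin m) ℂ := fun j => J ⊗ₖ E j with hNdef
  have hn0 : (n : ℂ) ≠ 0 := Nat.cast_ne_zero.2 (by omega)
  have hJJ : J * J = (n : ℂ) • J := by
    ext a b; simp [hJ, Matrix.mul_apply]
  have hNN : ∀ j k, N j * N k = if j = k then (n : ℂ) • N j else 0 := by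
    intro j k
    rw [hNdef]
    simp only
    rw [← Matrix.mul_kronecker_mul, hJJ, horth]
    split
    · rw [Matrix.smul_kronecker]
    · simp
  have hMeq : (-(Complex.I * t)) • (J ⊗ₖ A) = ∑ j, ((-(Complex.I * t)) * lam j) • N j := by
    ext ⟨a, b⟩ ⟨c, e⟩
    simp [hA, hJ, hNdef, Matrix.sum_apply, Finset.mul_sum, mul_comm, mul_left_comm]
  rw [hMeq, exp_sum_ortho N _ ((n : ℂ)) hn0 hNN]
  have hne : ((⟨⟨0, by omega⟩, u⟩ : Fin n × Fin m)) ≠ (⟨⟨1, by omega⟩, u⟩) := by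
    simp [Prod.ext_iff, Fin.ext_iff]
  rw [Matrix.add_apply, Matrix.one_apply_ne hne, Matrix.sum_apply]
  rw [Finset.mul_sum, zero_add]
  refine Finset.sum_congr rfl fun j _ => ?_
  simp only [Matrix.smul_apply, hNdef, Matrix.kroneckerMap_apply, hJ, Matrix.of_apply,
    smul_eq_mul, one_mul]
  have harg : (n : ℂ) * ((-(Complex.I * t)) * lam j) = -(Complex.I) * n * lam j * t := by ring
  rw [harg]
  field_simp
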